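/- Assume r_Φ(a) ≥ 0 for all a, and set w_a = π(a) r_Φ(a) and p_{a,n} = (1 − π_D(a))^n. Then the variance of Σ_a w_a · 1{n(a) > 0} is at most Σ_a w_a² · p_{a,n}(1 − p_{a,n}). (The key step is the negative-association inequality: for distinct actions a ≠ b, E[(1{n(a)>0} − (1−p_{a,n}))(1{n(b)>0} − (1−p_{b,n}))] ≤ 0.) -/

import Mathlib

open MeasureTheory ENNReal

noncomputable section

namespace OffPolicy

variable {K : ℕ}

/-- `π` is a probability mass function on the action set. -/
def IsPolicy (π : Fin K → ℝ) : Prop := (∀ a, 0 ≤ π a) ∧ ∑ a, π a = 1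

/-- A behavior policy: a pmf with everywhere positive probabilities. -/
def IsBehaviorPolicy (πD : Fin K → ℝ) : Prop := (∀ a, 0 < πD a) ∧ ∑ a, πD a = 1

/-- The distribution of a single action `A ~ π_D`. -/
def actionMeasure (πD : Fin K → ℝ) : Measure (Fin K) :=
  ∑ a : Fin K, (πD a).toNNReal • Measure.dirac a

instance actionMeasure_finite (πD : Fin K → ℝ) : IsFiniteMeasure (actionMeasure πD) := by
  unfold actionMeasure; infer_instance

/-- The distribution of the i.i.d. actions `A_1, …, A_n`. -/
def actionData (n : ℕ) (πD : Fin K → ℝ) : Measure (Fin n → Fin K) :=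
  Measure.pi fun _ => actionMeasure πD

/-- `n(a) = #{i : A_i = a}`. -/
def cntA (n : ℕ) (d : Fin n → Fin K) (a : Fin K) : ℕ :=
  (Finset.univ.filter fun i => d i = a).card

instance actionData_finite (n : ℕ) (πD : Fin K → ℝ) : IsFiniteMeasure (actionData n πD) := by
  unfold actionData; infer_instance

lemma actionMeasure_singleton (πD : Fin K → ℝ) (x : Fin K) :
    actionMeasure πD {x} = ((πD x).toNNReal : ℝ≥0∞) := by
  simp [actionMeasure, Measure.finset_sum_apply, Measure.dirac_apply, Set.indicator,
    Finset.sum_ite_eq', ENNReal.smul_def, mul_one, - Measure.coe_nnreal_smul]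

lemma actionData_singleton {n : ℕ} (πD : Fin K → ℝ) (h0 : ∀ a, 0 ≤ πD a)
    (d : Fin n → Fin K) :
    ((actionData n πD) {d}).toReal = ∏ i, πD (d i) := by
  rw [actionData, ← Set.univ_pi_singleton, Measure.pi_pi, ENNReal.toReal_prod]
  exact Finset.prod_congr rfl fun i _ => by
    rw [actionMeasure_singleton]; simp [Real.coe_toNNReal _ (h0 _)]

lemma aux_integral {n : ℕ} (πD : Fin K → ℝ) (h0 : ∀ a, 0 ≤ πD a)
    (f : (Fin n → Fin K) → ℝ) :
    ∫ d, f d ∂(actionData n πD) = ∑ d, (∏ i, πD (d i)) * f d := by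
  rw [integral_fintype (hf := Integrable.of_finite)]
  exact Finset.sum_congr rfl fun d _ => by
    rw [Measure.real_def, actionData_singleton πD h0, smul_eq_mul]

lemma aux_sum_prod {n : ℕ} (g : Fin K → ℝ) :
    ∑ d : Fin n → Fin K, ∏ i, g (d i) = (∑ x, g x) ^ n := by
  calc ∑ d : Fin n → Fin K, ∏ i, g (d i)
      = ∑ d ∈ Fintype.piFinset (fun _ : Fin n => (Finset.univ : Finset (Fin K))),
          ∏ i, g (d i) := by rw [Fintype.piFinset_univ]
    _ = ∏ _i : Fin n, ∑ x, g x := (Finset.prod_univ_sum _ _).symm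
    _ = (∑ x, g x) ^ n := by simp


lemma cntA_eq_zero_iff {n : ℕ} (d : Fin n → Fin K) (a : Fin K) :
    cntA n d a = 0 ↔ ∀ i, d i ≠ a := by
  simp [cntA, Finset.card_eq_zero, Finset.filter_eq_empty_iff]

lemma Y_eq_prod {n : ℕ} (d : Fin n → Fin K) (a : Fin K) :
    (if cntA n d a = 0 then (1:ℝ) else 0) = ∏ i, (if d i = a then (0:ℝ) else 1) := by
  by_cases h : cntA n d a = 0
  · rw [if_pos h]
    rw [cntA_eq_zero_iff] at h
    rw [Finset.prod_eq_one fun i _ => if_neg (h i)]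
  · rw [if_neg h]
    rw [cntA_eq_zero_iff] at h
    push_neg at h
    obtain ⟨i, hi⟩ := h
    exact (Finset.prod_eq_zero (f := fun i => if d i = a then (0:ℝ) else 1) (Finset.mem_univ i) (if_pos hi)).symm

lemma aux_sum_PY {n : ℕ} (πD : Fin K → ℝ) (hD1 : ∑ a, πD a = 1) (a : Fin K) :
    ∑ d : Fin n → Fin K, (∏ i, πD (d i)) * (if cntA n d a = 0 then (1:ℝ) else 0)
      = (1 - πD a) ^ n := by
  have key : ∀ d : Fin n → Fin K, (∏ i, πD (d i)) * (if cntA n d a = 0 then (1:ℝ) else 0)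
      = ∏ i, (πD (d i) * if d i = a then 0 else 1) := fun d => by
    rw [Y_eq_prod, ← Finset.prod_mul_distrib]
  rw [Finset.sum_congr rfl fun d _ => key d,
    aux_sum_prod (fun x => πD x * if x = a then (0:ℝ) else 1)]
  congr 1
  have h : ∀ x : Fin K, πD x * (if x = a then (0:ℝ) else 1)
      = πD x - (if x = a then πD x else 0) := fun x => by split <;> ring
  rw [Finset.sum_congr rfl fun x _ => h x, Finset.sum_sub_distrib, hD1,
    Finset.sum_ite_eq' Finset.univ a πD, if_pos (Finset.mem_univ a)]

lemma aux_sum_PYY {n : ℕ} (πD : Fin K → ℝ) (hD1 : ∑ a, πD a = 1) {a b : Fin K}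
    (hab : a ≠ b) :
    ∑ d : Fin n → Fin K, (∏ i, πD (d i)) *
        ((if cntA n d a = 0 then (1:ℝ) else 0) * (if cntA n d b = 0 then (1:ℝ) else 0))
      = (1 - πD a - πD b) ^ n := by
  have key : ∀ d : Fin n → Fin K, (∏ i, πD (d i)) *
        ((if cntA n d a = 0 then (1:ℝ) else 0) * (if cntA n d b = 0 then (1:ℝ) else 0))
      = ∏ i, (πD (d i) * ((if d i = a then 0 else 1) * (if d i = b then 0 else 1))) :=
    fun d => by
      rw [Y_eq_prod d a, Y_eq_prod d b, ← Finset.prod_mul_distrib, ← Finset.prod_mul_distrib]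
  rw [Finset.sum_congr rfl fun d _ => key d,
    aux_sum_prod (fun x => πD x * ((if x = a then (0:ℝ) else 1) * if x = b then 0 else 1))]
  congr 1
  have h : ∀ x : Fin K, πD x * ((if x = a then (0:ℝ) else 1) * (if x = b then 0 else 1))
      = πD x - (if x = a then πD x else 0) - (if x = b then πD x else 0) := fun x => by
    split_ifs with h1 h2
    · exact absurd (h1.symm.trans h2) hab
    all_goals ring
  rw [Finset.sum_congr rfl fun x _ => h x, Finset.sum_sub_distrib, Finset.sum_sub_distrib,
    hD1, Finset.sum_ite_eq' Finset.univ a πD, Finset.sum_ite_eq' Finset.univ b πD,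
    if_pos (Finset.mem_univ a), if_pos (Finset.mem_univ b)]


/-- Lemma 2: with `w_a = π(a) r_Φ(a) ≥ 0` and
`p_{a,n} = (1 − π_D(a))^n`, the variance of `Σ_a w_a 1{n(a)>0}` is at most
`Σ_a w_a² p_{a,n}(1 − p_{a,n})`; the key step is the negative-association
inequality `E[(1{n(a)>0} − (1 − p_{a,n}))(1{n(b)>0} − (1 − p_{b,n}))] ≤ 0`
for distinct actions `a ≠ b`. -/
theorem variance_indicator_sum_le {K : ℕ} (n : ℕ)
    (π πD : Fin K → ℝ) (hπ : IsPolicy π) (hπD : IsBehaviorPolicy πD)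
    (r : Fin K → ℝ) (hr : ∀ a, 0 ≤ r a) :
    (∫ d, ((∑ a, π a * r a * (if 0 < cntA n d a then (1 : ℝ) else 0)) -
          ∫ d', (∑ a, π a * r a * (if 0 < cntA n d' a then (1 : ℝ) else 0))
            ∂(actionData n πD)) ^ 2
        ∂(actionData n πD)) ≤
      ∑ a, (π a * r a) ^ 2 * ((1 - πD a) ^ n * (1 - (1 - πD a) ^ n)) ∧
    ∀ a b : Fin K, a ≠ b →
      (∫ d, ((if 0 < cntA n d a then (1 : ℝ) else 0) - (1 - (1 - πD a) ^ n)) *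
            ((if 0 < cntA n d b then (1 : ℝ) else 0) - (1 - (1 - πD b) ^ n))
          ∂(actionData n πD)) ≤ 0 := by
  obtain ⟨hπ0, -⟩ := hπ
  obtain ⟨hD0, hD1⟩ := hπD
  have h0 : ∀ a, 0 ≤ πD a := fun a => (hD0 a).le
  -- indicator of positivity in terms of indicator of zero
  have hX : ∀ (d : Fin n → Fin K) (a : Fin K),
      (if 0 < cntA n d a then (1:ℝ) else 0) = 1 - (if cntA n d a = 0 then (1:ℝ) else 0) := by
    intro d a
    by_cases h : cntA n d a = 0 <;> simp [h, Nat.pos_of_ne_zero]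
  have hYsq : ∀ (a : Fin K) (d : Fin n → Fin K),
      (if cntA n d a = 0 then (1:ℝ) else 0) * (if cntA n d a = 0 then (1:ℝ) else 0)
        = (if cntA n d a = 0 then (1:ℝ) else 0) := by
    intro a d; by_cases h : cntA n d a = 0 <;> simp [h]
  have hP1 : ∑ d : Fin n → Fin K, ∏ i, πD (d i) = 1 := by
    rw [aux_sum_prod πD, hD1, one_pow]
  -- covariance identity for distinct actions
  have cov : ∀ a b : Fin K, a ≠ b →
      ∑ d : Fin n → Fin K, (∏ i, πD (d i)) *
        (((1 - πD a) ^ n - (if cntA n d a = 0 then (1:ℝ) else 0)) *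
         ((1 - πD b) ^ n - (if cntA n d b = 0 then (1:ℝ) else 0)))
      = (1 - πD a - πD b) ^ n - (1 - πD a) ^ n * (1 - πD b) ^ n := by
    intro a b hab
    have expand : ∀ d : Fin n → Fin K, (∏ i, πD (d i)) *
          (((1 - πD a) ^ n - (if cntA n d a = 0 then (1:ℝ) else 0)) *
           ((1 - πD b) ^ n - (if cntA n d b = 0 then (1:ℝ) else 0)))
        = ((1 - πD a) ^ n * (1 - πD b) ^ n) * (∏ i, πD (d i))
          - (1 - πD a) ^ n * ((∏ i, πD (d i)) * (if cntA n d b = 0 then (1:ℝ) else 0))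
          - (1 - πD b) ^ n * ((∏ i, πD (d i)) * (if cntA n d a = 0 then (1:ℝ) else 0))
          + (∏ i, πD (d i)) *
              ((if cntA n d a = 0 then (1:ℝ) else 0) * (if cntA n d b = 0 then (1:ℝ) else 0)) :=
      fun d => by ring
    rw [Finset.sum_congr rfl fun d _ => expand d, Finset.sum_add_distrib,
      Finset.sum_sub_distrib, Finset.sum_sub_distrib, ← Finset.mul_sum, ← Finset.mul_sum,
      ← Finset.mul_sum, aux_sum_PY πD hD1 a, aux_sum_PY πD hD1 b, aux_sum_PYY πD hD1 hab, hP1]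
    ring
  -- nonpositivity of the covariance
  have hq : ∀ a b : Fin K, a ≠ b →
      (1 - πD a - πD b) ^ n - (1 - πD a) ^ n * (1 - πD b) ^ n ≤ 0 := by
    intro a b hab
    have hsub : πD a + πD b ≤ 1 := by
      rw [← hD1, ← Finset.sum_pair hab]
      exact Finset.sum_le_sum_of_subset_of_nonneg (Finset.subset_univ _)
        (fun x _ _ => h0 x)
    have h1 : (0:ℝ) ≤ 1 - πD a - πD b := by linarith
    have h2 : 1 - πD a - πD b ≤ (1 - πD a) * (1 - πD b) := by
      nlinarith [mul_pos (hD0 a) (hD0 b)]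
    have := pow_le_pow_left₀ h1 h2 n
    rw [mul_pow] at this
    linarith
  have hCov : ∀ a b : Fin K, a ≠ b →
      ∑ d : Fin n → Fin K, (∏ i, πD (d i)) *
        (((1 - πD a) ^ n - (if cntA n d a = 0 then (1:ℝ) else 0)) *
         ((1 - πD b) ^ n - (if cntA n d b = 0 then (1:ℝ) else 0))) ≤ 0 := by
    intro a b hab; rw [cov a b hab]; exact hq a b hab
  -- diagonal variance
  have diag : ∀ a : Fin K,
      ∑ d : Fin n → Fin K, (∏ i, πD (d i)) *
        (((1 - πD a) ^ n - (if cntA n d a = 0 then (1:ℝ) else 0)) *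
         ((1 - πD a) ^ n - (if cntA n d a = 0 then (1:ℝ) else 0)))
      = (1 - πD a) ^ n * (1 - (1 - πD a) ^ n) := by
    intro a
    have expand : ∀ d : Fin n → Fin K, (∏ i, πD (d i)) *
          (((1 - πD a) ^ n - (if cntA n d a = 0 then (1:ℝ) else 0)) *
           ((1 - πD a) ^ n - (if cntA n d a = 0 then (1:ℝ) else 0)))
        = ((1 - πD a) ^ n * (1 - πD a) ^ n) * (∏ i, πD (d i))
          - (2 * (1 - πD a) ^ n) * ((∏ i, πD (d i)) * (if cntA n d a = 0 then (1:ℝ) else 0))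
          + (∏ i, πD (d i)) * (if cntA n d a = 0 then (1:ℝ) else 0) := by
      intro d
      linear_combination (∏ i, πD (d i)) * hYsq a d
    rw [Finset.sum_congr rfl fun d _ => expand d, Finset.sum_add_distrib,
      Finset.sum_sub_distrib, ← Finset.mul_sum, ← Finset.mul_sum,
      aux_sum_PY πD hD1 a, hP1]
    ring
  constructor
  · -- variance bound
    have hE : ∫ d', (∑ a, π a * r a * (if 0 < cntA n d' a then (1 : ℝ) else 0))
          ∂(actionData n πD) = ∑ a, π a * r a * (1 - (1 - πD a) ^ n) := by
      rw [aux_integral πD h0]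
      simp only [Finset.mul_sum]
      rw [Finset.sum_comm]
      refine Finset.sum_congr rfl fun a _ => ?_
      have key : ∀ d : Fin n → Fin K,
          (∏ i, πD (d i)) * (π a * r a * (if 0 < cntA n d a then (1:ℝ) else 0))
          = (π a * r a) * (∏ i, πD (d i))
            - (π a * r a) * ((∏ i, πD (d i)) * (if cntA n d a = 0 then (1:ℝ) else 0)) := by
        intro d; rw [hX d a]; ring
      rw [Finset.sum_congr rfl fun d _ => key d, Finset.sum_sub_distrib,
        ← Finset.mul_sum, ← Finset.mul_sum, hP1, aux_sum_PY πD hD1 a]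
      ring
    rw [hE, aux_integral πD h0]
    have h1 : ∀ d : Fin n → Fin K,
        (∑ a, π a * r a * (if 0 < cntA n d a then (1:ℝ) else 0)) -
          (∑ a, π a * r a * (1 - (1 - πD a) ^ n))
        = ∑ a, π a * r a *
            ((1 - πD a) ^ n - (if cntA n d a = 0 then (1:ℝ) else 0)) := by
      intro d
      rw [← Finset.sum_sub_distrib]
      refine Finset.sum_congr rfl fun a _ => ?_
      rw [hX d a]; ring
    have h2 : ∀ d : Fin n → Fin K,
        (∏ i, πD (d i)) *
          ((∑ a, π a * r a * (if 0 < cntA n d a then (1:ℝ) else 0)) -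
            (∑ a, π a * r a * (1 - (1 - πD a) ^ n))) ^ 2
        = ∑ a, ∑ b, (π a * r a) * (π b * r b) *
            ((∏ i, πD (d i)) *
              (((1 - πD a) ^ n - (if cntA n d a = 0 then (1:ℝ) else 0)) *
               ((1 - πD b) ^ n - (if cntA n d b = 0 then (1:ℝ) else 0)))) := by
      intro d
      rw [h1 d, sq, Finset.sum_mul_sum, Finset.mul_sum]
      refine Finset.sum_congr rfl fun a _ => ?_
      rw [Finset.mul_sum]
      exact Finset.sum_congr rfl fun b _ => by ring
    rw [Finset.sum_congr rfl fun d _ => h2 d, Finset.sum_comm]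
    refine Finset.sum_le_sum fun a _ => ?_
    rw [Finset.sum_comm]
    rw [← Finset.add_sum_erase Finset.univ _ (Finset.mem_univ a)]
    have hdiagsum : ∑ d : Fin n → Fin K, (π a * r a) * (π a * r a) *
          ((∏ i, πD (d i)) *
            (((1 - πD a) ^ n - (if cntA n d a = 0 then (1:ℝ) else 0)) *
             ((1 - πD a) ^ n - (if cntA n d a = 0 then (1:ℝ) else 0))))
        = (π a * r a) ^ 2 * ((1 - πD a) ^ n * (1 - (1 - πD a) ^ n)) := by
      rw [← Finset.mul_sum, diag a]; ring
    have hrest : ∑ b ∈ Finset.univ.erase a, ∑ d : Fin n → Fin K,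
          (π a * r a) * (π b * r b) *
          ((∏ i, πD (d i)) *
            (((1 - πD a) ^ n - (if cntA n d a = 0 then (1:ℝ) else 0)) *
             ((1 - πD b) ^ n - (if cntA n d b = 0 then (1:ℝ) else 0)))) ≤ 0 := by
      refine Finset.sum_nonpos fun b hb => ?_
      rw [← Finset.mul_sum]
      have hba : a ≠ b := (Finset.ne_of_mem_erase hb).symm
      exact mul_nonpos_of_nonneg_of_nonpos
        (mul_nonneg (mul_nonneg (hπ0 a) (hr a)) (mul_nonneg (hπ0 b) (hr b)))
        (hCov a b hba)
    linarith
  · -- covariance inequality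
    intro a b hab
    rw [aux_integral πD h0]
    have key : ∀ d : Fin n → Fin K,
        (∏ i, πD (d i)) *
          (((if 0 < cntA n d a then (1:ℝ) else 0) - (1 - (1 - πD a) ^ n)) *
           ((if 0 < cntA n d b then (1:ℝ) else 0) - (1 - (1 - πD b) ^ n)))
        = (∏ i, πD (d i)) *
          (((1 - πD a) ^ n - (if cntA n d a = 0 then (1:ℝ) else 0)) *
           ((1 - πD b) ^ n - (if cntA n d b = 0 then (1:ℝ) else 0))) := by
      intro d; rw [hX d a, hX d b]; ring
    rw [Finset.sum_congr rfl fun d _ => key d]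
    exact hCov a b hab

end OffPolicy
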